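/- Fix d ≥ 1 and vectors σ, λ ∈ ℝ^d with strictly positive entries. For δ > 0 define x_i(δ) = σ_i·√(λ_i(λ_i + δ)), h_i(δ) = 1/(λ_i + δ), D_i(δ) = (λ_i³ + 2δλ_i² + (δ+δ²)λ_i)/(λ_i² + δλ_i), γ_SGD(δ) = (Σ x_i² h_i)/(Σ x_i²), γ_Muon(δ) = (Σ x_i h_i)/(Σ x_i), Φ_SGD(δ) = (Σ x_i²)²/(Σ x_i² D_i), Φ_Muon(δ) = (Σ x_i)²/(Σ D_i). Then as δ → ∞: δ²·γ_SGD(δ)²·Φ_SGD(δ) → Σ_i σ_i² λ_i and δ²·γ_Muon(δ)²·Φ_Muon(δ) → (Σ_i σ_i √λ_i)²/d; in particular, lim_{δ→∞} δ²·γ_Muon(δ)²·Φ_Muon(δ) ≤ lim_{δ→∞} δ²·γ_SGD(δ)²·Φ_SGD(δ). -/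

import Mathlib

open scoped BigOperators
open Filter

/-- `x_i(δ) = σ_i √(λ_i (λ_i + δ))`. -/
noncomputable def xv {d : ℕ} (σ lam : Fin d → ℝ) (δ : ℝ) (i : Fin d) : ℝ :=
  σ i * Real.sqrt (lam i * (lam i + δ))

/-- `h_i(δ) = 1 / (λ_i + δ)`. -/
noncomputable def hv {d : ℕ} (lam : Fin d → ℝ) (δ : ℝ) (i : Fin d) : ℝ :=
  1 / (lam i + δ)

/-- `D_i(δ) = (λ_i³ + 2δλ_i² + (δ + δ²)λ_i) / (λ_i² + δλ_i)`. -/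
noncomputable def Dv {d : ℕ} (lam : Fin d → ℝ) (δ : ℝ) (i : Fin d) : ℝ :=
  (lam i ^ 3 + 2 * δ * lam i ^ 2 + (δ + δ ^ 2) * lam i) / (lam i ^ 2 + δ * lam i)

/-- `γ_SGD(δ) = (∑ x_i² h_i) / (∑ x_i²)`. -/
noncomputable def gammaSGD {d : ℕ} (σ lam : Fin d → ℝ) (δ : ℝ) : ℝ :=
  (∑ i, (xv σ lam δ i) ^ 2 * hv lam δ i) / ∑ i, (xv σ lam δ i) ^ 2

/-- `γ_Muon(δ) = (∑ x_i h_i) / (∑ x_i)`. -/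
noncomputable def gammaMuon {d : ℕ} (σ lam : Fin d → ℝ) (δ : ℝ) : ℝ :=
  (∑ i, xv σ lam δ i * hv lam δ i) / ∑ i, xv σ lam δ i

/-- `Φ_SGD(δ) = (∑ x_i²)² / (∑ x_i² D_i)`. -/
noncomputable def PhiSGD {d : ℕ} (σ lam : Fin d → ℝ) (δ : ℝ) : ℝ :=
  (∑ i, (xv σ lam δ i) ^ 2) ^ 2 / ∑ i, (xv σ lam δ i) ^ 2 * Dv lam δ i

/-- `Φ_Muon(δ) = (∑ x_i)² / (∑ D_i)`. -/
noncomputable def PhiMuon {d : ℕ} (σ lam : Fin d → ℝ) (δ : ℝ) : ℝ :=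
  (∑ i, xv σ lam δ i) ^ 2 / ∑ i, Dv lam δ i

/-- In the undersampled limit `δ → ∞`:
`δ² γ_SGD² Φ_SGD → ∑ σ_i² λ_i` and `δ² γ_Muon² Φ_Muon → (∑ σ_i √λ_i)²/d`; in particular the
limit for Muon is at most the limit for SGD. -/
theorem stmt14 (d : ℕ) (hd : 1 ≤ d)
    (σ lam : Fin d → ℝ) (hσ : ∀ i, 0 < σ i) (hlam : ∀ i, 0 < lam i) :
    Tendsto (fun δ : ℝ => δ ^ 2 * gammaSGD σ lam δ ^ 2 * PhiSGD σ lam δ) atTop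
      (nhds (∑ i, σ i ^ 2 * lam i)) ∧
    Tendsto (fun δ : ℝ => δ ^ 2 * gammaMuon σ lam δ ^ 2 * PhiMuon σ lam δ) atTop
      (nhds ((∑ i, σ i * Real.sqrt (lam i)) ^ 2 / d)) ∧
    (∑ i, σ i * Real.sqrt (lam i)) ^ 2 / d ≤ ∑ i, σ i ^ 2 * lam i := by
  have hne : Nonempty (Fin d) := Fin.pos_iff_nonempty.mp hd
  have huniv : (Finset.univ : Finset (Fin d)).Nonempty := Finset.univ_nonempty
  have hd0 : (0:ℝ) < d := by exact_mod_cast hd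
  set A := ∑ i, σ i ^ 2 * lam i with hA
  have hApos : 0 < A :=
    Finset.sum_pos (fun i _ => mul_pos (pow_pos (hσ i) 2) (hlam i)) huniv
  -- Part 1 : SGD
  have key1 : ∀ δ : ℝ, 1 ≤ δ →
      δ ^ 2 * gammaSGD σ lam δ ^ 2 * PhiSGD σ lam δ
        = A ^ 2 / ∑ i, σ i ^ 2 * lam i * ((lam i * δ⁻¹ + 1) ^ 2 + δ⁻¹) := by
    intro δ hδ
    have hδ0 : (0:ℝ) < δ := lt_of_lt_of_le one_pos hδ
    have hld : ∀ i, 0 < lam i + δ := fun i => add_pos (hlam i) hδ0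
    have hx2 : ∀ i, xv σ lam δ i ^ 2 = σ i ^ 2 * (lam i * (lam i + δ)) := fun i => by
      rw [xv, mul_pow, Real.sq_sqrt (mul_nonneg (hlam i).le (hld i).le)]
    have hS : ∑ i, xv σ lam δ i ^ 2 = ∑ i, σ i ^ 2 * (lam i * (lam i + δ)) :=
      Finset.sum_congr rfl fun i _ => hx2 i
    have hSpos : 0 < ∑ i, xv σ lam δ i ^ 2 := by
      rw [hS]
      exact Finset.sum_pos
        (fun i _ => mul_pos (pow_pos (hσ i) 2) (mul_pos (hlam i) (hld i))) huniv
    have hnum : ∑ i, xv σ lam δ i ^ 2 * hv lam δ i = A := by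
      rw [hA]
      refine Finset.sum_congr rfl fun i _ => ?_
      rw [hx2 i, hv]
      field_simp [(hld i).ne']
    have hden : ∑ i, xv σ lam δ i ^ 2 * Dv lam δ i
        = δ ^ 2 * ∑ i, σ i ^ 2 * lam i * ((lam i * δ⁻¹ + 1) ^ 2 + δ⁻¹) := by
      rw [Finset.mul_sum]
      refine Finset.sum_congr rfl fun i _ => ?_
      rw [hx2 i, Dv]
      have h1 : (0:ℝ) < lam i ^ 2 + δ * lam i := by nlinarith [hlam i, hδ0]
      field_simp [h1.ne', hδ0.ne', (hld i).ne', (hlam i).ne']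
      ring
    have hT'pos : 0 < ∑ i, σ i ^ 2 * lam i * ((lam i * δ⁻¹ + 1) ^ 2 + δ⁻¹) :=
      Finset.sum_pos (fun i _ => mul_pos (mul_pos (pow_pos (hσ i) 2) (hlam i))
        (add_pos_of_nonneg_of_pos (sq_nonneg _) (inv_pos.mpr hδ0))) huniv
    rw [gammaSGD, PhiSGD, hnum, hden]
    have gen : ∀ S T : ℝ, S ≠ 0 → T ≠ 0 →
        δ ^ 2 * (A / S) ^ 2 * (S ^ 2 / (δ ^ 2 * T)) = A ^ 2 / T := by
      intro S T hS hT
      field_simp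
    exact gen _ _ hSpos.ne' hT'pos.ne'
  have hcont1 : Tendsto (fun t : ℝ =>
      A ^ 2 / ∑ i, σ i ^ 2 * lam i * ((lam i * t + 1) ^ 2 + t)) (nhds 0) (nhds A) := by
    have hden : Tendsto (fun t : ℝ => ∑ i, σ i ^ 2 * lam i * ((lam i * t + 1) ^ 2 + t))
        (nhds 0) (nhds (∑ i, σ i ^ 2 * lam i * ((lam i * 0 + 1) ^ 2 + 0))) := by
      refine tendsto_finset_sum _ fun i _ => ?_
      exact (ContinuousAt.mul continuousAt_const (by fun_prop))
    have hval : ∑ i, σ i ^ 2 * lam i * ((lam i * 0 + 1) ^ 2 + 0) = A := by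
      simp [hA]
    rw [hval] at hden
    have := Tendsto.div (tendsto_const_nhds (x := A ^ 2)) hden hApos.ne'
    have hAA : A ^ 2 / A = A := by
      rw [sq, mul_div_assoc, div_self hApos.ne', mul_one]
    rwa [hAA] at this
  have part1 : Tendsto (fun δ : ℝ => δ ^ 2 * gammaSGD σ lam δ ^ 2 * PhiSGD σ lam δ) atTop
      (nhds A) := by
    refine Tendsto.congr' ((eventually_ge_atTop 1).mono fun δ hδ => (key1 δ hδ).symm) ?_
    exact hcont1.comp tendsto_inv_atTop_zero
  -- Part 2 : Muon
  have key2 : ∀ δ : ℝ, 1 ≤ δ →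
      δ ^ 2 * gammaMuon σ lam δ ^ 2 * PhiMuon σ lam δ
        = (∑ i, σ i * Real.sqrt (lam i) / Real.sqrt (lam i * δ⁻¹ + 1)) ^ 2
            / ∑ i, ((lam i * δ⁻¹ + 1) + δ⁻¹ / (lam i * δ⁻¹ + 1)) := by
    intro δ hδ
    have hδ0 : (0:ℝ) < δ := lt_of_lt_of_le one_pos hδ
    have hld : ∀ i, 0 < lam i + δ := fun i => add_pos (hlam i) hδ0
    have hXpos : 0 < ∑ i, xv σ lam δ i :=
      Finset.sum_pos (fun i _ => mul_pos (hσ i)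
        (Real.sqrt_pos.mpr (mul_pos (hlam i) (hld i)))) huniv
    have hxh : ∀ i, xv σ lam δ i * hv lam δ i
        = Real.sqrt δ⁻¹ * (σ i * Real.sqrt (lam i) / Real.sqrt (lam i * δ⁻¹ + 1)) := by
      intro i
      have hs0 : 0 < Real.sqrt (lam i + δ) := Real.sqrt_pos.mpr (hld i)
      have hu0 : 0 < Real.sqrt δ⁻¹ := Real.sqrt_pos.mpr (inv_pos.mpr hδ0)
      have e2 : Real.sqrt (lam i * δ⁻¹ + 1) = Real.sqrt (lam i + δ) * Real.sqrt δ⁻¹ := by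
        rw [← Real.sqrt_mul (hld i).le]
        congr 1
        field_simp
      rw [xv, hv, Real.sqrt_mul (hlam i).le, e2]
      have hs : lam i + δ = Real.sqrt (lam i + δ) ^ 2 := (Real.sq_sqrt (hld i).le).symm
      rw [hs]
      field_simp
      rw [Real.sq_sqrt (sq_nonneg _)]
    have hN : ∑ i, xv σ lam δ i * hv lam δ i
        = Real.sqrt δ⁻¹ * ∑ i, σ i * Real.sqrt (lam i) / Real.sqrt (lam i * δ⁻¹ + 1) := by
      rw [Finset.mul_sum]; exact Finset.sum_congr rfl fun i _ => hxh i
    have hDi : ∀ i, Dv lam δ i = δ * ((lam i * δ⁻¹ + 1) + δ⁻¹ / (lam i * δ⁻¹ + 1)) := by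
      intro i
      rw [Dv]
      have h1 : (0:ℝ) < lam i ^ 2 + δ * lam i := by nlinarith [hlam i, hδ0]
      have h2 : (0:ℝ) < lam i * δ⁻¹ + 1 :=
        add_pos_of_nonneg_of_pos (mul_nonneg (hlam i).le (inv_pos.mpr hδ0).le) one_pos
      field_simp [h1.ne', h2.ne', (hld i).ne', (hlam i).ne']
      ring
    have hD : ∑ i, Dv lam δ i
        = δ * ∑ i, ((lam i * δ⁻¹ + 1) + δ⁻¹ / (lam i * δ⁻¹ + 1)) := by
      rw [Finset.mul_sum]; exact Finset.sum_congr rfl fun i _ => hDi i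
    have hEpos : 0 < ∑ i, ((lam i * δ⁻¹ + 1) + δ⁻¹ / (lam i * δ⁻¹ + 1)) := by
      refine Finset.sum_pos (fun i _ => ?_) huniv
      have h2 : (0:ℝ) < lam i * δ⁻¹ + 1 :=
        add_pos_of_nonneg_of_pos (mul_nonneg (hlam i).le (inv_pos.mpr hδ0).le) one_pos
      exact add_pos_of_pos_of_nonneg h2 (div_nonneg (inv_pos.mpr hδ0).le h2.le)
    rw [gammaMuon, PhiMuon, hN, hD]
    have hu2 : Real.sqrt δ⁻¹ ^ 2 = δ⁻¹ := Real.sq_sqrt (inv_pos.mpr hδ0).le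
    rw [div_pow, mul_pow, hu2]
    have gen : ∀ M X E : ℝ, X ≠ 0 → E ≠ 0 →
        δ ^ 2 * (δ⁻¹ * M ^ 2 / X ^ 2) * (X ^ 2 / (δ * E)) = M ^ 2 / E := by
      intro M X E hX hE
      field_simp
    exact gen _ _ _ hXpos.ne' hEpos.ne'
  have hGnum : Tendsto (fun t : ℝ => ∑ i, σ i * Real.sqrt (lam i) / Real.sqrt (lam i * t + 1))
      (nhds 0) (nhds (∑ i, σ i * Real.sqrt (lam i))) := by
    have h : Tendsto (fun t : ℝ => ∑ i, σ i * Real.sqrt (lam i) / Real.sqrt (lam i * t + 1))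
        (nhds 0) (nhds (∑ i, σ i * Real.sqrt (lam i) / Real.sqrt (lam i * 0 + 1))) := by
      refine tendsto_finset_sum _ fun i _ => ?_
      exact ContinuousAt.div continuousAt_const (by fun_prop) (by simp)
    simpa using h
  have hGden : Tendsto (fun t : ℝ => ∑ i, ((lam i * t + 1) + t / (lam i * t + 1)))
      (nhds 0) (nhds (d : ℝ)) := by
    have h : Tendsto (fun t : ℝ => ∑ i, ((lam i * t + 1) + t / (lam i * t + 1)))
        (nhds 0) (nhds (∑ i : Fin d, ((lam i * 0 + 1) + 0 / (lam i * 0 + 1)))) := by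
      refine tendsto_finset_sum _ fun i _ => ?_
      exact ContinuousAt.add (by fun_prop)
        (ContinuousAt.div (by fun_prop) (by fun_prop) (by norm_num))
    simpa using h
  have part2 : Tendsto (fun δ : ℝ => δ ^ 2 * gammaMuon σ lam δ ^ 2 * PhiMuon σ lam δ) atTop
      (nhds ((∑ i, σ i * Real.sqrt (lam i)) ^ 2 / d)) := by
    refine Tendsto.congr' ((eventually_ge_atTop 1).mono fun δ hδ => (key2 δ hδ).symm) ?_
    exact Tendsto.div (((hGnum.comp tendsto_inv_atTop_zero).pow 2))
      (hGden.comp tendsto_inv_atTop_zero) hd0.ne'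
  refine ⟨part1, part2, ?_⟩
  -- Cauchy–Schwarz
  rw [div_le_iff₀ hd0]
  have hcs := Finset.sum_mul_sq_le_sq_mul_sq Finset.univ (fun _ => (1:ℝ))
    (fun i => σ i * Real.sqrt (lam i))
  have hsq : ∀ i, (σ i * Real.sqrt (lam i)) ^ 2 = σ i ^ 2 * lam i := fun i => by
    rw [mul_pow, Real.sq_sqrt (hlam i).le]
  simp only [one_pow, one_mul, Finset.sum_const, Finset.card_univ, Fintype.card_fin,
    nsmul_eq_mul, mul_one, hsq] at hcs
  calc (∑ i, σ i * Real.sqrt (lam i)) ^ 2 ≤ (d : ℝ) * ∑ i, σ i ^ 2 * lam i := hcs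
    _ = A * d := by rw [hA]; ring
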